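/- Suppose F and G are normalized functions of bounded variation on ℝ (right continuous with F(−∞) = G(−∞) = 0) and there are no points of [0,T] at which F and G are both discontinuous. Then −∫_{[0,T]} G dμ_F = ∫_{[0,T]} F dμ_G − F(T)G(T) + F(0−)G(0−), where μ_F, μ_G are the Lebesgue–Stieltjes signed measures associated to F and G. -/

import Mathlib

open Real MeasureTheory Filter

namespace SIBP

open Set Function

lemma fin_restrict (f : StieltjesFunction ℝ) (a b : ℝ) :
    IsFiniteMeasure (f.measure.restrict (Icc a b)) :=
  ⟨by rw [Measure.restrict_apply_univ, f.measure_Icc]; exact ENNReal.ofReal_lt_top⟩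

lemma integrableOn_of_monotone (f : StieltjesFunction ℝ) {g : ℝ → ℝ} (hg : Monotone g)
    (a b : ℝ) : IntegrableOn g (Icc a b) f.measure := by
  haveI := fin_restrict f a b
  refine Integrable.mono' (integrable_const (max |g a| |g b|))
    hg.measurable.aestronglyMeasurable.restrict ?_
  filter_upwards [ae_restrict_mem measurableSet_Icc] with x hx
  have h1 : g a ≤ g x := hg hx.1
  have h2 : g x ≤ g b := hg hx.2
  rw [Real.norm_eq_abs, abs_le]
  refine ⟨?_, ?_⟩
  · have := neg_abs_le (g a); have := le_max_left |g a| |g b|; linarith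
  · have := le_abs_self (g b); have := le_max_right |g a| |g b|; linarith

lemma monotone_leftLim {g : ℝ → ℝ} (hg : Monotone g) : Monotone (leftLim g) := by
  intro x y hxy
  rcases eq_or_lt_of_le hxy with rfl | h
  · exact le_rfl
  · exact (hg.leftLim_le le_rfl).trans (hg.le_leftLim h)

lemma cont_leftLim {f : ℝ → ℝ} {x : ℝ} (h : ContinuousAt f x) :
    leftLim f x = f x :=
  leftLim_eq_of_tendsto h.continuousWithinAt.tendsto

lemma leftLim_sub (f g : StieltjesFunction ℝ) (x : ℝ) :
    leftLim (fun y => f y - g y) x = leftLim f x - leftLim g x :=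
  leftLim_eq_of_tendsto
    ((f.mono.tendsto_leftLim x).sub (g.mono.tendsto_leftLim x))

lemma integral_eq_key (f g : StieltjesFunction ℝ) {T : ℝ} (hT : 0 < T) :
    ∫ x in Icc (0:ℝ) T, g x ∂f.measure
      = leftLim g 0 * (f T - leftLim f 0)
        + ((f.measure.restrict (Icc 0 T)).prod (g.measure.restrict (Icc 0 T))
            {p : ℝ × ℝ | p.2 ≤ p.1}).toReal := by
  haveI := fin_restrict f 0 T
  haveI := fin_restrict g 0 T
  have hfS : f.measure (Icc 0 T) = ENNReal.ofReal (f T - leftLim f 0) := f.measure_Icc 0 T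
  have hf0 : leftLim f 0 ≤ f T := (f.mono.leftLim_le le_rfl).trans (f.mono hT.le)
  have hint : IntegrableOn g (Icc 0 T) f.measure := integrableOn_of_monotone f g.mono 0 T
  have step1 : ∫ x in Icc (0:ℝ) T, g x ∂f.measure
      = leftLim g 0 * (f T - leftLim f 0)
        + ∫ x in Icc (0:ℝ) T, (g x - leftLim g 0) ∂f.measure := by
    rw [integral_sub hint (integrable_const _), setIntegral_const]
    rw [measureReal_def, hfS, ENNReal.toReal_ofReal (by linarith), smul_eq_mul]
    ring
  rw [step1]
  congr 1
  have hnn : ∀ x ∈ Icc (0:ℝ) T, 0 ≤ g x - leftLim g 0 := by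
    intro x hx
    have : leftLim g 0 ≤ g x := (g.mono.leftLim_le le_rfl).trans (g.mono hx.1)
    linarith
  have hmeas : Measurable fun x => g x - leftLim g 0 := g.mono.measurable.sub measurable_const
  rw [integral_eq_lintegral_of_nonneg_ae
      (by filter_upwards [ae_restrict_mem measurableSet_Icc] with x hx using hnn x hx)
      hmeas.aestronglyMeasurable.restrict]
  congr 1
  rw [Measure.prod_apply (measurableSet_le measurable_snd measurable_fst)]
  have : ∀ x ∈ Icc (0:ℝ) T,
      ENNReal.ofReal (g x - leftLim g 0)
        = (g.measure.restrict (Icc 0 T)) (Prod.mk x ⁻¹' {p : ℝ × ℝ | p.2 ≤ p.1}) := by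
    intro x hx
    have hpre : (Prod.mk x ⁻¹' {p : ℝ × ℝ | p.2 ≤ p.1}) = Iic x := rfl
    rw [hpre, Measure.restrict_apply measurableSet_Iic]
    have : Iic x ∩ Icc 0 T = Icc 0 x := by
      ext y; simp only [mem_inter_iff, mem_Iic, mem_Icc]
      constructor
      · rintro ⟨h1, h2, _⟩; exact ⟨h2, h1⟩
      · rintro ⟨h1, h2⟩; exact ⟨h2, h1, h2.trans hx.2⟩
    rw [this, g.measure_Icc]
  exact setLIntegral_congr_fun measurableSet_Icc this

lemma diag_eq (f g : StieltjesFunction ℝ) {T : ℝ} :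
    ((f.measure.restrict (Icc 0 T)).prod (g.measure.restrict (Icc 0 T))
        {p : ℝ × ℝ | p.1 = p.2}).toReal
      = ∫ x in Icc (0:ℝ) T, (g x - leftLim g x) ∂f.measure := by
  haveI := fin_restrict f 0 T
  haveI := fin_restrict g 0 T
  have hmeas : Measurable fun x : ℝ => g x - leftLim g x :=
    g.mono.measurable.sub (monotone_leftLim g.mono).measurable
  rw [integral_eq_lintegral_of_nonneg_ae
      (ae_of_all _ fun x => by have := g.mono.leftLim_le (le_refl x); simpa using sub_nonneg.2 this)
      hmeas.aestronglyMeasurable.restrict]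
  congr 1
  rw [Measure.prod_apply (measurableSet_eq_fun measurable_fst measurable_snd)]
  refine (setLIntegral_congr_fun measurableSet_Icc (fun x hx => ?_)).symm
  have hpre : (Prod.mk x ⁻¹' {p : ℝ × ℝ | p.1 = p.2}) = {x} := by
    ext y; simp [eq_comm]
  rw [hpre, Measure.restrict_apply (measurableSet_singleton x)]
  have : ({x} : Set ℝ) ∩ Icc 0 T = {x} := inter_eq_self_of_subset_left (by simpa using hx)
  rw [this, g.measure_singleton]

lemma swap_eq (f g : StieltjesFunction ℝ) {T : ℝ} :
    ((g.measure.restrict (Icc 0 T)).prod (f.measure.restrict (Icc 0 T))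
        {p : ℝ × ℝ | p.2 ≤ p.1})
      = ((f.measure.restrict (Icc 0 T)).prod (g.measure.restrict (Icc 0 T))
        {p : ℝ × ℝ | p.1 ≤ p.2}) := by
  haveI := fin_restrict f 0 T
  haveI := fin_restrict g 0 T
  rw [← Measure.measurePreserving_swap.measure_preimage
      (measurableSet_le measurable_snd measurable_fst).nullMeasurableSet]
  rfl

lemma incl_excl (f g : StieltjesFunction ℝ) {T : ℝ} (hT : 0 < T) :
    (((f.measure.restrict (Icc 0 T)).prod (g.measure.restrict (Icc 0 T))
        {p : ℝ × ℝ | p.2 ≤ p.1})).toReal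
      + (((f.measure.restrict (Icc 0 T)).prod (g.measure.restrict (Icc 0 T))
        {p : ℝ × ℝ | p.1 ≤ p.2})).toReal
      = (f T - leftLim f 0) * (g T - leftLim g 0)
        + (((f.measure.restrict (Icc 0 T)).prod (g.measure.restrict (Icc 0 T))
            {p : ℝ × ℝ | p.1 = p.2})).toReal := by
  haveI := fin_restrict f 0 T
  haveI := fin_restrict g 0 T
  set μ := (f.measure.restrict (Icc 0 T)).prod (g.measure.restrict (Icc 0 T)) with hμ
  haveI : IsFiniteMeasure μ := by rw [hμ]; infer_instance
  have hU : {p : ℝ × ℝ | p.2 ≤ p.1} ∪ {p : ℝ × ℝ | p.1 ≤ p.2} = univ := by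
    ext p; simpa using le_total p.2 p.1
  have hI : {p : ℝ × ℝ | p.2 ≤ p.1} ∩ {p : ℝ × ℝ | p.1 ≤ p.2} = {p : ℝ × ℝ | p.1 = p.2} := by
    ext p; exact ⟨fun h => le_antisymm h.2 h.1, fun h => ⟨h.ge, h.le⟩⟩
  have key := measure_union_add_inter (μ := μ) {p : ℝ × ℝ | p.2 ≤ p.1}
    (measurableSet_le measurable_fst measurable_snd)
  rw [hU, hI] at key
  have huniv : μ univ = ENNReal.ofReal (f T - leftLim f 0) * ENNReal.ofReal (g T - leftLim g 0) := by
    rw [hμ, ← univ_prod_univ, Measure.prod_prod, Measure.restrict_apply_univ,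
      Measure.restrict_apply_univ, f.measure_Icc, g.measure_Icc]
  have hf0 : (0:ℝ) ≤ f T - leftLim f 0 := by
    have := (f.mono.leftLim_le le_rfl).trans (f.mono hT.le); linarith
  have hg0 : (0:ℝ) ≤ g T - leftLim g 0 := by
    have := (g.mono.leftLim_le le_rfl).trans (g.mono hT.le); linarith
  have := congrArg ENNReal.toReal key
  rw [ENNReal.toReal_add (measure_ne_top μ _) (measure_ne_top μ _),
      ENNReal.toReal_add (measure_ne_top μ _) (measure_ne_top μ _), huniv,
      ENNReal.toReal_mul, ENNReal.toReal_ofReal hf0, ENNReal.toReal_ofReal hg0] at this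
  linarith

lemma jump_integral_eq (T : ℝ) (F₁ F₂ G₁ G₂ : StieltjesFunction ℝ) (F G : ℝ → ℝ)
    (hF : ∀ x, F x = F₁ x - F₂ x) (hG : ∀ x, G x = G₁ x - G₂ x)
    (hdisc : ∀ x ∈ Set.Icc (0:ℝ) T, ContinuousAt F x ∨ ContinuousAt G x) :
    ∫ x in Icc (0:ℝ) T, (G x - leftLim G x) ∂F₁.measure
      = ∫ x in Icc (0:ℝ) T, (G x - leftLim G x) ∂F₂.measure := by
  have hGfun : G = fun y => G₁ y - G₂ y := funext hG
  have hFfun : F = fun y => F₁ y - F₂ y := funext hF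
  have hllG : ∀ x, leftLim G x = leftLim G₁ x - leftLim G₂ x := by
    intro x; rw [hGfun]; exact leftLim_sub G₁ G₂ x
  have hllF : ∀ x, leftLim F x = leftLim F₁ x - leftLim F₂ x := by
    intro x; rw [hFfun]; exact leftLim_sub F₁ F₂ x
  set j : ℝ → ℝ := fun x => G x - leftLim G x with hj
  have hjint : ∀ f : StieltjesFunction ℝ, IntegrableOn j (Icc 0 T) f.measure := by
    intro f
    have : j = fun x => ((G₁ x - leftLim G₁ x) - (G₂ x - leftLim G₂ x)) := by
      funext x; simp only [hj, hG x, hllG x]; ring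
    rw [this]
    exact (((integrableOn_of_monotone f G₁.mono 0 T).sub
      (integrableOn_of_monotone f (monotone_leftLim G₁.mono) 0 T)).sub
      ((integrableOn_of_monotone f G₂.mono 0 T).sub
      (integrableOn_of_monotone f (monotone_leftLim G₂.mono) 0 T)))
  set C : Set ℝ := {x | x ∈ Icc (0:ℝ) T ∧ j x ≠ 0} with hC
  have hCsub : C ⊆ {x | ¬ContinuousAt G₁ x} ∪ {x | ¬ContinuousAt G₂ x} := by
    rintro x ⟨hxS, hxj⟩
    by_contra h
    simp only [mem_union, mem_setOf_eq, not_or, not_not] at h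
    obtain ⟨h1, h2⟩ := h
    have : ContinuousAt G x := by rw [hGfun]; exact h1.sub h2
    exact hxj (by simp [hj, cont_leftLim this])
  have hCcount : C.Countable :=
    ((G₁.mono.countable_not_continuousAt).union (G₂.mono.countable_not_continuousAt)).mono hCsub
  have hCmeas : MeasurableSet C := hCcount.measurableSet
  have hred : ∀ f : StieltjesFunction ℝ,
      ∫ x in Icc (0:ℝ) T, j x ∂f.measure = ∫ x in C, j x ∂f.measure := by
    intro f
    have h1 : ∀ x ∈ Icc (0:ℝ) T, j x = C.indicator j x := by
      intro x hx
      by_cases hxC : x ∈ C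
      · rw [indicator_of_mem hxC]
      · rw [indicator_of_notMem hxC]
        by_contra hne
        exact hxC ⟨hx, hne⟩
    rw [setIntegral_congr_fun measurableSet_Icc h1, setIntegral_indicator hCmeas]
    congr 1
    rw [inter_eq_self_of_subset_right (fun x hx => hx.1)]
  have hsing : ∀ x ∈ C, F₁.measure {x} = F₂.measure {x} := by
    rintro x ⟨hxS, hxj⟩
    have hnG : ¬ContinuousAt G x := fun hcont => hxj (by simp [hj, cont_leftLim hcont])
    have hcF : ContinuousAt F x := (hdisc x hxS).resolve_right hnG
    have : leftLim F x = F x := cont_leftLim hcF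
    rw [hllF x, hF x] at this
    rw [F₁.measure_singleton, F₂.measure_singleton]
    congr 1
    linarith
  rw [hred F₁, hred F₂,
    setIntegral_countable _ hCcount ((hjint F₁).mono_set (fun x hx => hx.1)),
    setIntegral_countable _ hCcount ((hjint F₂).mono_set (fun x hx => hx.1))]
  exact tsum_congr fun x => by rw [measureReal_def, measureReal_def, hsing x x.2]

end SIBP

/-- Integration by parts for normalized functions of bounded variation, written as
differences of (right-continuous, monotone) Stieltjes functions with associated
Lebesgue–Stieltjes measures. -/
theorem stmt_15 (T : ℝ) (hT : 0 < T)
    (F₁ F₂ G₁ G₂ : StieltjesFunction ℝ) (F G : ℝ → ℝ)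
    (hF : ∀ x, F x = F₁ x - F₂ x) (hG : ∀ x, G x = G₁ x - G₂ x)
    (hFbot : Tendsto F atBot (nhds 0)) (hGbot : Tendsto G atBot (nhds 0))
    (hdisc : ∀ x ∈ Set.Icc (0:ℝ) T, ContinuousAt F x ∨ ContinuousAt G x) :
    -((∫ x in Set.Icc (0:ℝ) T, G x ∂F₁.measure) - ∫ x in Set.Icc (0:ℝ) T, G x ∂F₂.measure)
      = ((∫ x in Set.Icc (0:ℝ) T, F x ∂G₁.measure) - ∫ x in Set.Icc (0:ℝ) T, F x ∂G₂.measure)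
        - F T * G T + Function.leftLim F 0 * Function.leftLim G 0 := by
  open SIBP Set Function in
  -- abbreviations
  have hGfun : G = fun y => G₁ y - G₂ y := funext hG
  have hFfun : F = fun y => F₁ y - F₂ y := funext hF
  have hllG0 : leftLim G 0 = leftLim G₁ 0 - leftLim G₂ 0 := by
    rw [hGfun]; exact leftLim_sub G₁ G₂ 0
  have hllF0 : leftLim F 0 = leftLim F₁ 0 - leftLim F₂ 0 := by
    rw [hFfun]; exact leftLim_sub F₁ F₂ 0
  -- split the integrals of F and G
  have hGsplit : ∀ f : StieltjesFunction ℝ,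
      ∫ x in Icc (0:ℝ) T, G x ∂f.measure
        = (∫ x in Icc (0:ℝ) T, G₁ x ∂f.measure) - ∫ x in Icc (0:ℝ) T, G₂ x ∂f.measure := by
    intro f
    rw [← integral_sub (integrableOn_of_monotone f G₁.mono 0 T)
      (integrableOn_of_monotone f G₂.mono 0 T)]
    exact setIntegral_congr_fun measurableSet_Icc (fun x _ => hG x)
  have hFsplit : ∀ g : StieltjesFunction ℝ,
      ∫ x in Icc (0:ℝ) T, F x ∂g.measure
        = (∫ x in Icc (0:ℝ) T, F₁ x ∂g.measure) - ∫ x in Icc (0:ℝ) T, F₂ x ∂g.measure := by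
    intro g
    rw [← integral_sub (integrableOn_of_monotone g F₁.mono 0 T)
      (integrableOn_of_monotone g F₂.mono 0 T)]
    exact setIntegral_congr_fun measurableSet_Icc (fun x _ => hF x)
  -- product-measure quantities
  set P : StieltjesFunction ℝ → StieltjesFunction ℝ → ℝ := fun f g =>
    ((f.measure.restrict (Icc 0 T)).prod (g.measure.restrict (Icc 0 T))
      {p : ℝ × ℝ | p.2 ≤ p.1}).toReal with hP
  set Q : StieltjesFunction ℝ → StieltjesFunction ℝ → ℝ := fun f g =>
    ((f.measure.restrict (Icc 0 T)).prod (g.measure.restrict (Icc 0 T))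
      {p : ℝ × ℝ | p.1 ≤ p.2}).toReal with hQ
  set D : StieltjesFunction ℝ → StieltjesFunction ℝ → ℝ := fun f g =>
    ((f.measure.restrict (Icc 0 T)).prod (g.measure.restrict (Icc 0 T))
      {p : ℝ × ℝ | p.1 = p.2}).toReal with hD
  -- the eight basic integral identities
  have hkeyG : ∀ f g : StieltjesFunction ℝ, ∫ x in Icc (0:ℝ) T, g x ∂f.measure
      = leftLim g 0 * (f T - leftLim f 0) + P f g := fun f g => integral_eq_key f g hT
  have hswap : ∀ f g : StieltjesFunction ℝ, P g f = Q f g := by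
    intro f g; rw [hP, hQ]; exact congrArg ENNReal.toReal (swap_eq f g)
  have hPQ : ∀ f g : StieltjesFunction ℝ,
      P f g + Q f g = (f T - leftLim f 0) * (g T - leftLim g 0) + D f g :=
    fun f g => incl_excl f g hT
  -- the diagonal terms
  have hDint : ∀ f g : StieltjesFunction ℝ,
      D f g = ∫ x in Icc (0:ℝ) T, (g x - leftLim g x) ∂f.measure := fun f g => diag_eq f g
  have hDcomb : ∀ f : StieltjesFunction ℝ,
      D f G₁ - D f G₂ = ∫ x in Icc (0:ℝ) T, (G x - leftLim G x) ∂f.measure := by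
    intro f
    have i1 : IntegrableOn (fun x => G₁ x - leftLim G₁ x) (Icc 0 T) f.measure :=
      (integrableOn_of_monotone f G₁.mono 0 T).sub
        (integrableOn_of_monotone f (monotone_leftLim G₁.mono) 0 T)
    have i2 : IntegrableOn (fun x => G₂ x - leftLim G₂ x) (Icc 0 T) f.measure :=
      (integrableOn_of_monotone f G₂.mono 0 T).sub
        (integrableOn_of_monotone f (monotone_leftLim G₂.mono) 0 T)
    rw [hDint f G₁, hDint f G₂, ← integral_sub i1 i2]
    refine setIntegral_congr_fun measurableSet_Icc (fun x _ => ?_)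
    have : leftLim G x = leftLim G₁ x - leftLim G₂ x := by
      rw [hGfun]; exact leftLim_sub G₁ G₂ x
    rw [hG x, this]; ring
  have hjump : D F₁ G₁ - D F₁ G₂ - (D F₂ G₁ - D F₂ G₂) = 0 := by
    rw [hDcomb F₁, hDcomb F₂, jump_integral_eq T F₁ F₂ G₁ G₂ F G hF hG hdisc, sub_self]
  -- assemble
  rw [hGsplit F₁, hGsplit F₂, hFsplit G₁, hFsplit G₂,
    hkeyG F₁ G₁, hkeyG F₁ G₂, hkeyG F₂ G₁, hkeyG F₂ G₂,
    hkeyG G₁ F₁, hkeyG G₁ F₂, hkeyG G₂ F₁, hkeyG G₂ F₂,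
    hswap F₁ G₁, hswap F₁ G₂, hswap F₂ G₁, hswap F₂ G₂,
    hF T, hG T, hllF0, hllG0]
  have e11 := hPQ F₁ G₁
  have e12 := hPQ F₁ G₂
  have e21 := hPQ F₂ G₁
  have e22 := hPQ F₂ G₂
  linear_combination -e11 + e12 + e21 - e22 - hjump
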